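/- arXiv:2103.03318 — 2 statements merged into one kernel-verified Lean document; each statement's English description precedes it below -/
import Mathlib

section
/- Suppose V is invariant under the reflection 𝔰(u₁,u₂,…,u_k) = (-u₁,u₂,…,u_k) and σ± = (±1,0,…,0) are zeros of V. Then for every q ∈ X(σ⁻, σ⁺) there exists a symmetric curve q_sym ∈ X(σ⁻, σ⁺) with q_sym(-t) = 𝔰(q_sym(t)) for all t, whose energy satisfies E(q_sym) ≤ E(q). -/
open MeasureTheory Filter intervalIntegral
open scoped RealInnerProductSpace Topology

noncomputable section

variable {k : ℕ}

/-- Absolutely continuous curve whose (a.e.) derivative is `deriv q`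
(the model for `H¹_loc(ℝ, ℝᵏ)` curves). -/
def AC (q : ℝ → EuclideanSpace ℝ (Fin k)) : Prop :=
  MeasureTheory.LocallyIntegrable (deriv q) volume ∧
    ∀ a b : ℝ, q b - q a = ∫ t in a..b, deriv q t

/-- Energy density `½|q'(t)|² + V(q(t))`. -/
def Ed (V : EuclideanSpace ℝ (Fin k) → ℝ) (q : ℝ → EuclideanSpace ℝ (Fin k)) (t : ℝ) : ℝ :=
  (1 / 2) * ‖deriv q t‖ ^ 2 + V (q t)

/-- Finite energy: the energy density is integrable over `ℝ`. -/
def FiniteEnergy (V : EuclideanSpace ℝ (Fin k) → ℝ) (q : ℝ → EuclideanSpace ℝ (Fin k)) : Prop :=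
  Integrable (Ed V q) volume

/-- The energy `E(q) = ∫ ½|q'|² + V(q)`. -/
def Energy (V : EuclideanSpace ℝ (Fin k) → ℝ) (q : ℝ → EuclideanSpace ℝ (Fin k)) : ℝ :=
  ∫ t, Ed V q t

/-- The space `X(σᵢ, σⱼ)` of finite-energy curves from `σᵢ` to `σⱼ`. -/
def InX (V : EuclideanSpace ℝ (Fin k) → ℝ) (σi σj : EuclideanSpace ℝ (Fin k))
    (q : ℝ → EuclideanSpace ℝ (Fin k)) : Prop :=
  AC q ∧ FiniteEnergy V q ∧ Tendsto q atBot (𝓝 σi) ∧ Tendsto q atTop (𝓝 σj)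

/-- Membership in `H¹(ℝ, ℝᵏ)`. -/
def MemH1 (v : ℝ → EuclideanSpace ℝ (Fin k)) : Prop :=
  AC v ∧ MemLp v 2 volume ∧ MemLp (deriv v) 2 volume

/-- The `H¹(ℝ, ℝᵏ)` norm. -/
def H1norm (v : ℝ → EuclideanSpace ℝ (Fin k)) : ℝ :=
  Real.sqrt ((∫ t, ‖v t‖ ^ 2) + ∫ t, ‖deriv v t‖ ^ 2)

variable [NeZero k]

/-- The reflection `𝔰` negating the first coordinate. -/
def refl1 (u : EuclideanSpace ℝ (Fin k)) : EuclideanSpace ℝ (Fin k) :=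
  WithLp.toLp 2 (fun i => if i = 0 then -u i else u i)


lemma refl1_invol : Function.Involutive (refl1 (k := k)) := by
  intro u; ext i; by_cases h : i = 0 <;> simp [refl1, h]

def refl1Lin : EuclideanSpace ℝ (Fin k) →ₗ[ℝ] EuclideanSpace ℝ (Fin k) where
  toFun := refl1
  map_add' u v := by
    ext i; by_cases h : i = 0 <;> simp [refl1, h, PiLp.add_apply]; ring
  map_smul' c u := by
    ext i; by_cases h : i = 0 <;> simp [refl1, h, PiLp.smul_apply, smul_eq_mul]

lemma refl1_norm (u : EuclideanSpace ℝ (Fin k)) : ‖refl1 u‖ = ‖u‖ := by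
  rw [EuclideanSpace.norm_eq, EuclideanSpace.norm_eq]
  congr 1
  refine Finset.sum_congr rfl fun i _ => ?_
  by_cases h : i = 0 <;> simp [refl1, h]

def refl1LIE : EuclideanSpace ℝ (Fin k) ≃ₗᵢ[ℝ] EuclideanSpace ℝ (Fin k) :=
  { LinearEquiv.ofInvolutive refl1Lin refl1_invol with
    norm_map' := refl1_norm }

def refl1CLM : EuclideanSpace ℝ (Fin k) →L[ℝ] EuclideanSpace ℝ (Fin k) :=
  refl1LIE.toLinearIsometry.toContinuousLinearMap

lemma refl1CLM_apply (u : EuclideanSpace ℝ (Fin k)) : refl1CLM u = refl1 u := rfl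

lemma deriv_refl1_comp (f : ℝ → EuclideanSpace ℝ (Fin k)) (t : ℝ) :
    deriv (fun s => refl1 (f s)) t = refl1 (deriv f t) := by
  by_cases h : DifferentiableAt ℝ f t
  · exact (((refl1CLM (k := k)).hasFDerivAt.comp_hasDerivAt t h.hasDerivAt)).deriv
  · have h2 : ¬ DifferentiableAt ℝ (fun s => refl1 (f s)) t := by
      intro h2
      apply h
      have hf : f = fun s => refl1 (refl1 (f s)) := funext fun s => (refl1_invol (f s)).symm
      rw [hf]
      exact ((refl1CLM (k := k)).differentiableAt.comp t h2)
    rw [deriv_zero_of_not_differentiableAt h, deriv_zero_of_not_differentiableAt h2]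
    exact (map_zero refl1Lin).symm

lemma refl1_neg (u : EuclideanSpace ℝ (Fin k)) : refl1 (-u) = -refl1 u :=
  map_neg refl1Lin u

lemma refl1_sub (u v : EuclideanSpace ℝ (Fin k)) : refl1 (u - v) = refl1 u - refl1 v :=
  map_sub refl1Lin u v

lemma refl1_zero : refl1 (0 : EuclideanSpace ℝ (Fin k)) = 0 := map_zero refl1Lin

lemma refl1_continuous : Continuous (refl1 (k := k)) := (refl1CLM (k := k)).continuous

lemma locallyIntegrable_of_interval {E : Type*} [NormedAddCommGroup E] {f : ℝ → E}
    (h : ∀ a b : ℝ, IntervalIntegrable f volume a b) : LocallyIntegrable f volume := by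
  rw [locallyIntegrable_iff]
  intro K hK
  obtain ⟨M, hM⟩ := hK.isBounded.subset_closedBall 0
  refine (((intervalIntegrable_iff' enorm_ne_top).mp (h (-M) M)).mono_set ?_)
  refine hM.trans ?_
  rw [Real.closedBall_eq_Icc]
  simpa using Set.Icc_subset_uIcc

lemma IntervalIntegrable.clm_comp {E F : Type*} [NormedAddCommGroup E] [NormedSpace ℝ E]
    [NormedAddCommGroup F] [NormedSpace ℝ F] {f : ℝ → E} {a b : ℝ}
    (L : E →L[ℝ] F) (h : IntervalIntegrable f volume a b) :
    IntervalIntegrable (fun t => L (f t)) volume a b := by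
  rw [intervalIntegrable_iff] at h ⊢
  exact L.integrable_comp h

lemma AC.intervalIntegrable {q : ℝ → EuclideanSpace ℝ (Fin k)} (h : AC q) (a b : ℝ) :
    IntervalIntegrable (deriv q) volume a b := by
  rw [intervalIntegrable_iff]
  exact (h.1.integrableOn_isCompact isCompact_uIcc).mono_set Set.Ioc_subset_Icc_self

lemma deriv_reflect (q : ℝ → EuclideanSpace ℝ (Fin k)) (t : ℝ) :
    deriv (fun s => refl1 (q (-s))) t = -refl1 (deriv q (-t)) := by
  rw [deriv_refl1_comp (fun s => q (-s)) t, deriv_comp_neg, refl1_neg]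

lemma Ed_reflect (V : EuclideanSpace ℝ (Fin k) → ℝ) (hsym : ∀ u, V (refl1 u) = V u)
    (q : ℝ → EuclideanSpace ℝ (Fin k)) (t : ℝ) :
    Ed V (fun s => refl1 (q (-s))) t = Ed V q (-t) := by
  unfold Ed
  rw [deriv_reflect, norm_neg, refl1_norm, hsym]

lemma reflect_InX (V : EuclideanSpace ℝ (Fin k) → ℝ) (hsym : ∀ u, V (refl1 u) = V u)
    (σm σp : EuclideanSpace ℝ (Fin k)) (hmp : refl1 σm = σp) (hpm : refl1 σp = σm)
    (q : ℝ → EuclideanSpace ℝ (Fin k)) (hq : InX V σm σp q) :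
    InX V σm σp (fun s => refl1 (q (-s))) := by
  obtain ⟨hAC, hfe, hbot, htop⟩ := hq
  have hd : deriv (fun s => refl1 (q (-s))) = fun t => -refl1 (deriv q (-t)) :=
    funext (deriv_reflect q)
  have hii : ∀ a b : ℝ, IntervalIntegrable (fun s => deriv q (-s)) volume a b := by
    intro a b
    simpa using (IntervalIntegrable.iff_comp_neg enorm_ne_top).mp (hAC.intervalIntegrable (-a) (-b))
  refine ⟨⟨?_, ?_⟩, ?_, ?_, ?_⟩
  · rw [hd]
    refine locallyIntegrable_of_interval fun a b => ?_
    have h2 := ((hii a b).clm_comp refl1CLM).neg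
    simp only [refl1CLM_apply, Pi.neg_def] at h2
    exact h2
  · intro a b
    rw [hd]
    have h1 : ∀ s : ℝ, (fun t => -refl1 (deriv q (-t))) s = -refl1CLM (deriv q (-s)) := by
      intro s; rw [refl1CLM_apply]
    calc refl1 (q (-b)) - refl1 (q (-a)) = refl1CLM (q (-b) - q (-a)) := by
          rw [refl1CLM_apply, refl1_sub]
      _ = refl1CLM (∫ t in (-a)..(-b), deriv q t) := by rw [hAC.2 (-a) (-b)]
      _ = refl1CLM (-∫ t in (-b)..(-a), deriv q t) := by rw [intervalIntegral.integral_symm]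
      _ = -refl1CLM (∫ t in a..b, (fun s => deriv q (-s)) t) := by
          rw [intervalIntegral.integral_comp_neg]; simp
      _ = -(∫ t in a..b, refl1CLM ((fun s => deriv q (-s)) t)) := by
          rw [refl1CLM.intervalIntegral_comp_comm (hii a b)]
      _ = ∫ t in a..b, -refl1 (deriv q (-t)) := by
          rw [← intervalIntegral.integral_neg]
          simp [refl1CLM_apply]
  · have : Integrable ((Ed V q) ∘ (fun t : ℝ => -t)) volume :=
      ((Measure.measurePreserving_neg volume).integrable_comp_emb
        (Homeomorph.neg ℝ).measurableEmbedding).mpr hfe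
    refine this.congr (Filter.Eventually.of_forall fun t => ?_)
    exact (Ed_reflect V hsym q t).symm
  · refine Tendsto.congr (fun t => rfl)
      (((refl1_continuous.tendsto σp).comp (htop.comp ?_)).mono_right (by rw [hpm]))
    exact tendsto_neg_atBot_atTop
  · refine Tendsto.congr (fun t => rfl)
      (((refl1_continuous.tendsto σm).comp (hbot.comp ?_)).mono_right (by rw [hmp]))
    exact tendsto_neg_atTop_atBot

set_option maxHeartbeats 2000000 in
lemma half_lemma (V : EuclideanSpace ℝ (Fin k) → ℝ) (hsym : ∀ u, V (refl1 u) = V u)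
    (σm σp : EuclideanSpace ℝ (Fin k)) (hmp : refl1 σm = σp)
    (q : ℝ → EuclideanSpace ℝ (Fin k)) (hq : InX V σm σp q)
    (t₀ : ℝ) (hfix : refl1 (q t₀) = q t₀) :
    ∃ qs : ℝ → EuclideanSpace ℝ (Fin k), InX V σm σp qs ∧
      (∀ t : ℝ, qs (-t) = refl1 (qs t)) ∧
      Energy V qs = 2 * ∫ t in Set.Iio t₀, Ed V q t := by
  obtain ⟨hAC, hfe, hbot, htop⟩ := hq
  set qs : ℝ → EuclideanSpace ℝ (Fin k) :=
    fun t => if t ≤ 0 then q (t + t₀) else refl1 (q (t₀ - t)) with hqs_def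
  set g : ℝ → EuclideanSpace ℝ (Fin k) :=
    fun t => if t ≤ 0 then deriv q (t + t₀) else -refl1 (deriv q (t₀ - t)) with hg_def
  have hqs0 : qs 0 = q t₀ := by simp [hqs_def]
  -- derivative identification off 0
  have hd_neg : ∀ t < (0:ℝ), deriv qs t = deriv q (t + t₀) := by
    intro t ht
    have hev : qs =ᶠ[𝓝 t] fun s => q (s + t₀) := by
      filter_upwards [Iio_mem_nhds ht] with s hs
      simp [hqs_def, le_of_lt (Set.mem_Iio.mp hs)]
    rw [hev.deriv_eq, deriv_comp_add_const]
  have hd_pos : ∀ t > (0:ℝ), deriv qs t = -refl1 (deriv q (t₀ - t)) := by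
    intro t ht
    have hev : qs =ᶠ[𝓝 t] fun s => refl1 (q (t₀ - s)) := by
      filter_upwards [Ioi_mem_nhds ht] with s hs
      simp [hqs_def, not_le.mpr (Set.mem_Ioi.mp hs)]
    rw [hev.deriv_eq, deriv_refl1_comp (fun s => q (t₀ - s)) t, deriv_comp_const_sub,
      refl1_neg]
  have hgd : ∀ t : ℝ, t ≠ 0 → deriv qs t = g t := by
    intro t ht
    rcases lt_or_gt_of_ne ht with h | h
    · rw [hd_neg t h, hg_def]; simp [le_of_lt h]
    · rw [hd_pos t h, hg_def]; simp [not_le.mpr h]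
  have hae0 : ∀ᵐ t : ℝ, t ≠ 0 := by
    rw [ae_iff]
    have h00 : {a : ℝ | ¬ a ≠ 0} = {0} := by ext a; simp
    rw [h00]
    exact measure_singleton 0
  have hgae : deriv qs =ᵐ[volume] g := by
    filter_upwards [hae0] with t ht using hgd t ht
  -- interval integrability of g
  have hii1 : ∀ a b : ℝ, IntervalIntegrable (fun t => deriv q (t + t₀)) volume a b := by
    intro a b
    simpa using (hAC.intervalIntegrable (a + t₀) (b + t₀)).comp_add_right t₀
  have hii2 : ∀ a b : ℝ, IntervalIntegrable (fun t => -refl1 (deriv q (t₀ - t))) volume a b := by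
    intro a b
    have h1 : IntervalIntegrable (fun t => deriv q (t₀ - t)) volume a b := by
      simpa using (hAC.intervalIntegrable (t₀ - a) (t₀ - b)).comp_sub_left t₀
    have h3 := (h1.clm_comp refl1CLM).neg
    simp only [refl1CLM_apply, Pi.neg_def] at h3
    exact h3
  have hgii : ∀ a b : ℝ, IntervalIntegrable g volume a b := by
    have h0 : ∀ c : ℝ, IntervalIntegrable g volume c 0 := by
      intro c
      rcases le_or_gt c 0 with hc | hc
      · rw [intervalIntegrable_iff] at *
        refine (intervalIntegrable_iff.mp (hii1 c 0)).congr_fun ?_ measurableSet_uIoc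
        intro t ht
        rw [Set.uIoc_of_le hc] at ht
        simp [hg_def, ht.2]
      · rw [intervalIntegrable_iff]
        refine (intervalIntegrable_iff.mp (hii2 c 0)).congr_fun ?_ measurableSet_uIoc
        intro t ht
        rw [Set.uIoc_of_ge hc.le] at ht
        simp [hg_def, not_le.mpr ht.1]
    intro a b
    exact (h0 a).trans ((h0 b).symm)
  have hqsii : ∀ a b : ℝ, IntervalIntegrable (deriv qs) volume a b := by
    intro a b
    rw [intervalIntegrable_iff] at *
    exact (intervalIntegrable_iff.mp (hgii a b)).congr (ae_restrict_of_ae hgae.symm)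
  -- FTC from 0
  have hftc0 : ∀ b : ℝ, qs b - qs 0 = ∫ s in (0:ℝ)..b, deriv qs s := by
    intro b
    have hIcong : (∫ s in (0:ℝ)..b, deriv qs s) = ∫ s in (0:ℝ)..b, g s :=
      intervalIntegral.integral_congr_ae
        (by filter_upwards [hgae] with s hs _ using hs)
    rw [hIcong]
    rcases le_or_gt b 0 with hb | hb
    · have hqsb : qs b = q (b + t₀) := by simp [hqs_def, hb]
      have h1 : (∫ s in (0:ℝ)..b, g s) = ∫ s in (0:ℝ)..b, deriv q (s + t₀) := by
        refine intervalIntegral.integral_congr_ae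
          (Filter.Eventually.of_forall fun s hs => ?_)
        rw [Set.uIoc_of_ge hb] at hs
        simp [hg_def, hs.2]
      rw [hqsb, hqs0, h1, intervalIntegral.integral_comp_add_right, zero_add]
      exact hAC.2 t₀ (b + t₀)
    · have hqsb : qs b = refl1 (q (t₀ - b)) := by simp [hqs_def, not_le.mpr hb]
      have h1 : (∫ s in (0:ℝ)..b, g s) = ∫ s in (0:ℝ)..b, -refl1CLM (deriv q (t₀ - s)) := by
        refine intervalIntegral.integral_congr_ae
          (Filter.Eventually.of_forall fun s hs => ?_)
        rw [Set.uIoc_of_le hb.le] at hs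
        simp [hg_def, not_le.mpr hs.1, refl1CLM_apply]
      have h2 : IntervalIntegrable (fun s => deriv q (t₀ - s)) volume 0 b := by
        simpa using (hAC.intervalIntegrable (t₀ - 0) (t₀ - b)).comp_sub_left t₀
      calc qs b - qs 0 = refl1CLM (q (t₀ - b) - q t₀) := by
            rw [hqsb, hqs0, refl1CLM_apply, refl1_sub, hfix]
        _ = refl1CLM (∫ t in t₀..(t₀ - b), deriv q t) := by rw [hAC.2 t₀ (t₀ - b)]
        _ = refl1CLM (-∫ t in (t₀ - b)..t₀, deriv q t) := by
            rw [intervalIntegral.integral_symm]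
        _ = -refl1CLM (∫ s in (0:ℝ)..b, deriv q (t₀ - s)) := by
            rw [intervalIntegral.integral_comp_sub_left]; simp
        _ = ∫ s in (0:ℝ)..b, -refl1CLM (deriv q (t₀ - s)) := by
            rw [intervalIntegral.integral_neg, refl1CLM.intervalIntegral_comp_comm h2]
        _ = ∫ s in (0:ℝ)..b, g s := h1.symm
  -- energy density of qs
  set e : ℝ → ℝ := fun t => if t ≤ 0 then Ed V q (t + t₀) else Ed V q (t₀ - t) with he_def
  have hEd : ∀ t : ℝ, t ≠ 0 → Ed V qs t = e t := by
    intro t ht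
    rcases lt_or_gt_of_ne ht with h | h
    · unfold Ed
      rw [hd_neg t h]
      simp [hqs_def, he_def, le_of_lt h, Ed]
    · unfold Ed
      rw [hd_pos t h]
      have h5 : qs t = refl1 (q (t₀ - t)) := by simp [hqs_def, not_le.mpr h]
      simp [he_def, not_le.mpr h, h5, norm_neg, refl1_norm, hsym, Ed]
  have hintf1 : Integrable (fun t : ℝ => Ed V q (t + t₀)) volume :=
    ((measurePreserving_add_right volume t₀).integrable_comp_emb
      (Homeomorph.addRight t₀).measurableEmbedding).mpr hfe
  have hintf2 : Integrable (fun t : ℝ => Ed V q (t₀ - t)) volume :=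
    ((Measure.measurePreserving_sub_left volume t₀).integrable_comp_emb
      (Homeomorph.subLeft t₀).measurableEmbedding).mpr hfe
  have hinte : Integrable e volume := by
    have hp := MeasureTheory.Integrable.piecewise (s := Set.Iic (0:ℝ))
      measurableSet_Iic hintf1.integrableOn hintf2.integrableOn
    refine hp.congr (Filter.Eventually.of_forall fun t => ?_)
    by_cases ht : t ≤ 0 <;> simp [Set.piecewise, he_def, ht, Set.mem_Iic]
  have hEdae : Ed V qs =ᵐ[volume] e := by
    filter_upwards [hae0] with t ht using hEd t ht
  refine ⟨qs, ⟨⟨?_, ?_⟩, ?_, ?_, ?_⟩, ?_, ?_⟩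
  · -- locally integrable
    exact locallyIntegrable_of_interval hqsii
  · -- FTC
    intro a b
    have h1 := hftc0 b
    have h2 := hftc0 a
    have h3 : (∫ t in a..b, deriv qs t) =
        (∫ t in a..(0:ℝ), deriv qs t) + ∫ t in (0:ℝ)..b, deriv qs t :=
      (intervalIntegral.integral_add_adjacent_intervals (hqsii a 0) (hqsii 0 b)).symm
    have h4 : (∫ t in a..(0:ℝ), deriv qs t) = -∫ t in (0:ℝ)..a, deriv qs t :=
      intervalIntegral.integral_symm 0 a
    rw [h3, h4, ← h1, ← h2, neg_sub, add_comm, sub_add_sub_cancel]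
  · -- finite energy
    exact hinte.congr hEdae.symm
  · -- tendsto at bot
    have h1 : Tendsto (fun t : ℝ => q (t + t₀)) atBot (𝓝 σm) :=
      hbot.comp (tendsto_atBot_add_const_right _ t₀ tendsto_id)
    refine h1.congr' ?_
    filter_upwards [eventually_le_atBot (0:ℝ)] with t ht
    simp [hqs_def, ht]
  · -- tendsto at top
    have h0 : Tendsto (fun t : ℝ => t₀ - t) atTop atBot :=
      tendsto_atBot_add_const_left _ t₀ tendsto_neg_atTop_atBot
    have h1 : Tendsto (fun t : ℝ => refl1 (q (t₀ - t))) atTop (𝓝 σp) := by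
      have := (refl1_continuous.tendsto σm).comp (hbot.comp h0)
      rwa [hmp] at this
    refine h1.congr' ?_
    filter_upwards [eventually_gt_atTop (0:ℝ)] with t ht
    simp [hqs_def, not_le.mpr ht]
  · -- symmetry
    intro t
    rcases lt_trichotomy t 0 with h | h | h
    · have h1 : qs (-t) = refl1 (q (t₀ - -t)) := by
        simp [hqs_def, not_le.mpr (neg_pos.mpr h)]
      have h2 : qs t = q (t + t₀) := by simp [hqs_def, le_of_lt h]
      rw [h1, h2]
      ring_nf
    · subst h
      simp [hqs0, hfix]
    · have h1 : qs (-t) = q (-t + t₀) := by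
        simp [hqs_def, le_of_lt (neg_neg_iff_pos.mpr h)]
      have h2 : qs t = refl1 (q (t₀ - t)) := by simp [hqs_def, not_le.mpr h]
      rw [h1, h2, refl1_invol]
      ring_nf
  · -- energy
    unfold Energy
    have hpre1 : (fun t : ℝ => t + t₀) ⁻¹' Set.Iic t₀ = Set.Iic 0 := by
      ext t; simp
    have hpre2 : (fun t : ℝ => t₀ - t) ⁻¹' Set.Iio t₀ = Set.Ioi 0 := by
      ext t; simp
    have hs1 : (∫ t in Set.Iic (0:ℝ), Ed V q (t + t₀)) = ∫ t in Set.Iic t₀, Ed V q t := by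
      have := (measurePreserving_add_right volume t₀).setIntegral_preimage_emb
        (Homeomorph.addRight t₀).measurableEmbedding (Ed V q) (Set.Iic t₀)
      rw [← this]
      rw [hpre1]
    have hs2 : (∫ t in Set.Ioi (0:ℝ), Ed V q (t₀ - t)) = ∫ t in Set.Iio t₀, Ed V q t := by
      have := (Measure.measurePreserving_sub_left volume t₀).setIntegral_preimage_emb
        (Homeomorph.subLeft t₀).measurableEmbedding (Ed V q) (Set.Iio t₀)
      rw [← this]
      rw [hpre2]
    calc ∫ t, Ed V qs t = ∫ t, e t := integral_congr_ae hEdae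
      _ = (∫ t in Set.Iic (0:ℝ), e t) + ∫ t in Set.Ioi (0:ℝ), e t := by
          rw [← Set.compl_Iic]
          exact (integral_add_compl measurableSet_Iic hinte).symm
      _ = (∫ t in Set.Iic (0:ℝ), Ed V q (t + t₀)) + ∫ t in Set.Ioi (0:ℝ), Ed V q (t₀ - t) := by
          congr 1
          · exact setIntegral_congr_fun measurableSet_Iic fun t ht => by
              simp [he_def, Set.mem_Iic.mp ht]
          · exact setIntegral_congr_fun measurableSet_Ioi fun t ht => by
              simp [he_def, not_le.mpr (Set.mem_Ioi.mp ht)]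
      _ = (∫ t in Set.Iic t₀, Ed V q t) + ∫ t in Set.Iio t₀, Ed V q t := by rw [hs1, hs2]
      _ = 2 * ∫ t in Set.Iio t₀, Ed V q t := by
          rw [setIntegral_congr_set (Iio_ae_eq_Iic (a := t₀)).symm]
          ring

theorem stmt_10 (V : EuclideanSpace ℝ (Fin k) → ℝ)
    (hV : ContDiff ℝ 2 V) (hVnn : ∀ u, 0 ≤ V u)
    (S : Set (EuclideanSpace ℝ (Fin k))) (hSfin : S.Finite)
    (hSzero : ∀ u, V u = 0 ↔ u ∈ S)
    (hhess : ∀ σ ∈ S, ∀ u : EuclideanSpace ℝ (Fin k), u ≠ 0 →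
      0 < iteratedFDeriv ℝ 2 V σ ![u, u])
    (α₀ β₀ R₀ : ℝ) (hα₀ : 0 < α₀) (hβ₀ : 0 < β₀) (hR₀ : 0 < R₀)
    (hcoer : ∀ u : EuclideanSpace ℝ (Fin k), R₀ ≤ ‖u‖ →
      α₀ * ‖u‖ ^ 2 ≤ ⟪gradient V u, u⟫ ∧ β₀ ≤ V u)
    (hsym : ∀ u, V (refl1 u) = V u)
    (σm σp : EuclideanSpace ℝ (Fin k))
    (hσm : σm = -EuclideanSpace.single 0 (1 : ℝ))
    (hσp : σp = EuclideanSpace.single 0 (1 : ℝ))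
    (hσmS : σm ∈ S) (hσpS : σp ∈ S)
    (q : ℝ → EuclideanSpace ℝ (Fin k)) (hq : InX V σm σp q) :
    ∃ qs : ℝ → EuclideanSpace ℝ (Fin k), InX V σm σp qs ∧
      (∀ t : ℝ, qs (-t) = refl1 (qs t)) ∧ Energy V qs ≤ Energy V q := by
  have hmp : refl1 σm = σp := by
    subst hσm hσp
    ext i
    by_cases h : i = 0 <;>
      simp [refl1, h, EuclideanSpace.single_apply]
  have hpm : refl1 σp = σm := by rw [← hmp, refl1_invol]
  -- continuity of q
  have hcont : Continuous q := by
    have h1 : Continuous fun b => ∫ t in (0:ℝ)..b, deriv q t :=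
      intervalIntegral.continuous_primitive (fun a b => hq.1.intervalIntegrable a b) 0
    have h2 : q = fun b => q 0 + ∫ t in (0:ℝ)..b, deriv q t := by
      funext b
      have h3 := hq.1.2 0 b
      have h4 : q b = (∫ t in (0:ℝ)..b, deriv q t) + q 0 := sub_eq_iff_eq_add.mp h3
      rw [h4]; abel
    rw [h2]; exact continuous_const.add h1
  have hproj : Continuous (fun t => q t 0) :=
    (EuclideanSpace.proj (0 : Fin k)).continuous.comp hcont
  have hσm0 : σm 0 = -1 := by
    subst hσm; simp [EuclideanSpace.single_apply]
  have hσp0 : σp 0 = 1 := by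
    subst hσp; simp [EuclideanSpace.single_apply]
  have hbot0 : Tendsto (fun t => q t 0) atBot (𝓝 (-1)) := by
    have := ((EuclideanSpace.proj (0 : Fin k)).continuous.tendsto σm).comp hq.2.2.1
    simpa [hσm0, Function.comp_def] using this
  have htop0 : Tendsto (fun t => q t 0) atTop (𝓝 1) := by
    have := ((EuclideanSpace.proj (0 : Fin k)).continuous.tendsto σp).comp hq.2.2.2
    simpa [hσp0, Function.comp_def] using this
  obtain ⟨a, ha⟩ := (Filter.Tendsto.eventually_lt_const (by norm_num : (-1:ℝ) < 0) hbot0).exists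
  obtain ⟨b, hb⟩ := (Filter.Tendsto.eventually_const_lt (by norm_num : (0:ℝ) < 1) htop0).exists
  obtain ⟨t₀, -, ht₀⟩ := intermediate_value_uIcc (hproj.continuousOn (s := Set.uIcc a b))
    (Set.mem_uIcc.mpr (Or.inl ⟨ha.le, hb.le⟩))
  have hfix : refl1 (q t₀) = q t₀ := by
    ext i
    have ht₀' : q t₀ 0 = 0 := ht₀
    by_cases h : i = 0
    · subst h; simp [refl1, ht₀']
    · simp [refl1, h]
  set A := ∫ t in Set.Iio t₀, Ed V q t with hA
  set B := ∫ t in Set.Ioi t₀, Ed V q t with hB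
  have hsplit : A + B = Energy V q := by
    have h1 := integral_add_compl (measurableSet_Iio (a := t₀)) hq.2.1
    rw [Set.compl_Iio] at h1
    rw [hA, hB, setIntegral_congr_set (Ioi_ae_eq_Ici (a := t₀))]
    exact h1
  rcases le_total A B with hAB | hAB
  · obtain ⟨qs, hqs1, hqs2, hqs3⟩ := half_lemma V hsym σm σp hmp q hq t₀ hfix
    exact ⟨qs, hqs1, hqs2, by rw [hqs3]; linarith⟩
  · have hq' := reflect_InX V hsym σm σp hmp hpm q hq
    have hfix' : refl1 ((fun s => refl1 (q (-s))) (-t₀)) = (fun s => refl1 (q (-s))) (-t₀) := by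
      simp only [neg_neg]
      rw [refl1_invol (q t₀)]
      exact hfix.symm
    obtain ⟨qs, hqs1, hqs2, hqs3⟩ := half_lemma V hsym σm σp hmp _ hq' (-t₀) hfix'
    have hB' : (∫ t in Set.Iio (-t₀), Ed V (fun s => refl1 (q (-s))) t) = B := by
      have h1 : (∫ t in Set.Iio (-t₀), Ed V (fun s => refl1 (q (-s))) t)
          = ∫ t in Set.Iio (-t₀), Ed V q (-t) :=
        setIntegral_congr_fun measurableSet_Iio (fun t _ => Ed_reflect V hsym q t)
      rw [h1, setIntegral_congr_set (Iio_ae_eq_Iic (a := -t₀)), integral_comp_neg_Iic,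
        neg_neg, hB]
    exact ⟨qs, hqs1, hqs2, by rw [hqs3, hB']; linarith⟩
end
end

section
/- Let C < 𝔪* := min{𝔪_{σ⁻σ} + 𝔪_{σσ⁺} : σ ∈ Σ \ {σ⁻, σ⁺}}. Then there exists ρ₂ = ρ₂(C) > 0, depending only on V and C, such that every q ∈ X(σ⁻, σ⁺) with E(q) ≤ C satisfies |q(t) - σ| ≥ ρ₂ for all t ∈ ℝ and all σ ∈ Σ \ {σ⁻, σ⁺}. -/
open MeasureTheory Filter intervalIntegral
open scoped RealInnerProductSpace Topology

noncomputable section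

variable {k : ℕ}

/-- `𝔪_{σᵢσⱼ}`, the infimum of the energy over `X(σᵢ, σⱼ)`. -/
def mVal (V : EuclideanSpace ℝ (Fin k) → ℝ) (σi σj : EuclideanSpace ℝ (Fin k)) : ℝ :=
  sInf (Energy V '' {q | InX V σi σj q})

/- ===== Auxiliary machinery ===== -/

section Auxiliary

variable {k : ℕ}

lemma Ed_nonneg' {V : EuclideanSpace ℝ (Fin k) → ℝ} (hVnn : ∀ u, 0 ≤ V u)
    (q : ℝ → EuclideanSpace ℝ (Fin k)) (t : ℝ) : 0 ≤ Ed V q t :=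
  add_nonneg (by positivity) (hVnn _)

lemma energy_nonneg' {V : EuclideanSpace ℝ (Fin k) → ℝ} (hVnn : ∀ u, 0 ≤ V u)
    (q : ℝ → EuclideanSpace ℝ (Fin k)) : 0 ≤ Energy V q :=
  integral_nonneg (fun t => Ed_nonneg' hVnn q t)

lemma mVal_nonneg' {V : EuclideanSpace ℝ (Fin k) → ℝ} (hVnn : ∀ u, 0 ≤ V u)
    (a b : EuclideanSpace ℝ (Fin k)) : 0 ≤ mVal V a b := by
  apply Real.sInf_nonneg
  rintro x ⟨q, -, rfl⟩
  exact energy_nonneg' hVnn q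

lemma bddBelow_energy' {V : EuclideanSpace ℝ (Fin k) → ℝ} (hVnn : ∀ u, 0 ≤ V u)
    (s : Set (ℝ → EuclideanSpace ℝ (Fin k))) : BddBelow (Energy V '' s) := by
  refine ⟨0, ?_⟩
  rintro x ⟨q, -, rfl⟩
  exact energy_nonneg' hVnn q

lemma locInt_congr_ae {F : Type*} [NormedAddCommGroup F] {f g : ℝ → F}
    (hf : MeasureTheory.LocallyIntegrable f volume) (h : f =ᵐ[volume] g) :
    MeasureTheory.LocallyIntegrable g volume := by
  rw [MeasureTheory.locallyIntegrable_iff] at hf ⊢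
  exact fun K hK => (hf K hK).congr (ae_restrict_of_ae h)

lemma locInt_intervalIntegrable {F : Type*} [NormedAddCommGroup F] {f : ℝ → F}
    (hf : MeasureTheory.LocallyIntegrable f volume) (a b : ℝ) :
    IntervalIntegrable f volume a b := by
  rw [intervalIntegrable_iff]
  exact (hf.integrableOn_isCompact isCompact_uIcc).mono_set Set.uIoc_subset_uIcc

lemma locInt_comp_neg {F : Type*} [NormedAddCommGroup F] {f : ℝ → F}
    (hf : MeasureTheory.LocallyIntegrable f volume) :
    MeasureTheory.LocallyIntegrable (fun t => f (-t)) volume := by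
  rw [MeasureTheory.locallyIntegrable_iff] at hf ⊢
  intro K hK
  have hemb : MeasurableEmbedding (Neg.neg : ℝ → ℝ) :=
    (Homeomorph.neg ℝ).isClosedEmbedding.measurableEmbedding
  have h1 : IntegrableOn f (Neg.neg '' K) volume := hf _ (hK.image continuous_neg)
  have hmap : (Measure.map Neg.neg (volume : Measure ℝ)).restrict (Neg.neg '' K)
      = Measure.map Neg.neg ((volume : Measure ℝ).restrict (Neg.neg ⁻¹' (Neg.neg '' K))) :=
    hemb.restrict_map _ _
  rw [Measure.map_neg_eq_self, Set.preimage_image_eq K neg_injective] at hmap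
  have h2 : Integrable f (Measure.map Neg.neg ((volume : Measure ℝ).restrict K)) := by
    rw [← hmap]; exact h1
  rw [hemb.integrable_map_iff] at h2
  exact h2

lemma deriv_comp_neg' (q : ℝ → EuclideanSpace ℝ (Fin k)) (t : ℝ) :
    deriv (fun s => q (-s)) t = - deriv q (-t) := by
  by_cases h : DifferentiableAt ℝ q (-t)
  · have h1 : HasDerivAt (fun s : ℝ => q (-s)) ((-1 : ℝ) • deriv q (-t)) t :=
      (h.hasDerivAt.scomp t (hasDerivAt_neg t))
    simpa using h1.deriv
  · have h2 : ¬ DifferentiableAt ℝ (fun s => q (-s)) t := by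
      intro hd
      have h3 : DifferentiableAt ℝ ((fun s => q (-s)) ∘ (fun s : ℝ => -s)) (-t) :=
        (by simpa using hd : DifferentiableAt ℝ (fun s => q (-s)) (- -t)).comp (-t)
          (differentiable_neg (-t))
      simp only [Function.comp_def, neg_neg] at h3
      exact h h3
    rw [deriv_zero_of_not_differentiableAt h2, deriv_zero_of_not_differentiableAt h, neg_zero]

lemma Ed_comp_neg' (V : EuclideanSpace ℝ (Fin k) → ℝ) (q : ℝ → EuclideanSpace ℝ (Fin k)) (t : ℝ) :
    Ed V (fun s => q (-s)) t = Ed V q (-t) := by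
  simp [Ed, deriv_comp_neg']

lemma energy_comp_neg' (V : EuclideanSpace ℝ (Fin k) → ℝ) (q : ℝ → EuclideanSpace ℝ (Fin k)) :
    Energy V (fun s => q (-s)) = Energy V q := by
  unfold Energy
  simp_rw [Ed_comp_neg']
  exact integral_neg_eq_self _ _

lemma InX_rev' {V : EuclideanSpace ℝ (Fin k) → ℝ} {a b : EuclideanSpace ℝ (Fin k)}
    {q : ℝ → EuclideanSpace ℝ (Fin k)} (hq : InX V a b q) :
    InX V b a (fun t => q (-t)) := by
  obtain ⟨⟨hloc, hftc⟩, hfe, hbot, htop⟩ := hq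
  refine ⟨⟨?_, ?_⟩, ?_, ?_, ?_⟩
  · have h1 : MeasureTheory.LocallyIntegrable (fun t => -deriv q (-t)) volume :=
      (locInt_comp_neg hloc).neg
    exact locInt_congr_ae h1 (Filter.Eventually.of_forall fun t => (deriv_comp_neg' q t).symm)
  · intro a' b'
    have h1 : (∫ t in a'..b', deriv (fun s => q (-s)) t)
        = ∫ t in a'..b', (-(deriv q (-t))) := by
      apply intervalIntegral.integral_congr
      intro s _
      exact deriv_comp_neg' q s
    rw [h1, intervalIntegral.integral_neg, intervalIntegral.integral_comp_neg (deriv q),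
      ← hftc (-b') (-a')]
    abel
  · have h1 : Integrable (fun t => Ed V q (-t)) volume := hfe.comp_neg
    exact h1.congr (Filter.Eventually.of_forall fun t => (Ed_comp_neg' V q t).symm)
  · exact htop.comp tendsto_neg_atBot_atTop
  · exact hbot.comp tendsto_neg_atTop_atBot

/-- The spliced curve: follow `q` up to time `t₀`, then go straight to `σ` in unit time,
then stay at `σ`. -/
def sp (q : ℝ → EuclideanSpace ℝ (Fin k)) (t₀ : ℝ) (σ : EuclideanSpace ℝ (Fin k)) :
    ℝ → EuclideanSpace ℝ (Fin k) := fun t =>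
  if t ≤ t₀ then q t else if t ≤ t₀ + 1 then q t₀ + (t - t₀) • (σ - q t₀) else σ

variable {q : ℝ → EuclideanSpace ℝ (Fin k)} {t₀ : ℝ} {σ : EuclideanSpace ℝ (Fin k)}

lemma sp_left {t : ℝ} (ht : t ≤ t₀) : sp q t₀ σ t = q t := if_pos ht

lemma sp_mid {t : ℝ} (ht1 : t₀ < t) (ht2 : t ≤ t₀ + 1) :
    sp q t₀ σ t = q t₀ + (t - t₀) • (σ - q t₀) := by
  rw [sp, if_neg (not_le.mpr ht1), if_pos ht2]

lemma sp_right {t : ℝ} (ht : t₀ + 1 < t) : sp q t₀ σ t = σ := by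
  have h1 : ¬ t ≤ t₀ := by push_neg; linarith
  rw [sp, if_neg h1, if_neg (not_le.mpr ht)]

lemma deriv_sp_left {t : ℝ} (ht : t < t₀) : deriv (sp q t₀ σ) t = deriv q t := by
  apply Filter.EventuallyEq.deriv_eq
  filter_upwards [Iio_mem_nhds ht] with s hs
  exact sp_left (le_of_lt hs)

lemma deriv_sp_mid {t : ℝ} (ht1 : t₀ < t) (ht2 : t < t₀ + 1) :
    deriv (sp q t₀ σ) t = σ - q t₀ := by
  have h1 : HasDerivAt (fun s : ℝ => q t₀ + (s - t₀) • (σ - q t₀)) (σ - q t₀) t := by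
    have h2 := (((hasDerivAt_id t).sub_const t₀).smul_const (σ - q t₀)).const_add (q t₀)
    simpa using h2
  have h2 : deriv (sp q t₀ σ) t = deriv (fun s : ℝ => q t₀ + (s - t₀) • (σ - q t₀)) t := by
    apply Filter.EventuallyEq.deriv_eq
    filter_upwards [Ioo_mem_nhds ht1 ht2] with s hs
    exact sp_mid hs.1 hs.2.le
  rw [h2, h1.deriv]

lemma deriv_sp_right {t : ℝ} (ht : t₀ + 1 < t) : deriv (sp q t₀ σ) t = 0 := by
  have h2 : deriv (sp q t₀ σ) t = deriv (fun _ : ℝ => σ) t := by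
    apply Filter.EventuallyEq.deriv_eq
    filter_upwards [Ioi_mem_nhds ht] with s hs
    exact sp_right hs
  rw [h2, deriv_const]

lemma ae_notin_pair : ∀ᵐ t : ℝ, t ∉ ({t₀, t₀ + 1} : Set ℝ) :=
  measure_eq_zero_iff_ae_notMem.mp (((Set.finite_singleton (t₀+1)).insert t₀).measure_zero volume)

lemma sp_AC (hq : AC q) (t₀ : ℝ) (σ : EuclideanSpace ℝ (Fin k)) : AC (sp q t₀ σ) := by
  obtain ⟨hloc, hftc⟩ := hq
  have hae : deriv (sp q t₀ σ) =ᵐ[volume]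
      (fun t => Set.indicator (Set.Iio t₀) (deriv q) t
        + Set.indicator (Set.Ico t₀ (t₀+1)) (fun _ => σ - q t₀) t) := by
    filter_upwards [ae_notin_pair (t₀ := t₀)] with t ht
    simp only [Set.mem_insert_iff, Set.mem_singleton_iff, not_or] at ht
    rcases lt_trichotomy t t₀ with h | h | h
    · rw [deriv_sp_left h, Set.indicator_of_mem (Set.mem_Iio.mpr h),
        Set.indicator_of_notMem (by simp only [Set.mem_Ico, not_and, not_lt]; intro h'; linarith),
        add_zero]
    · exact absurd h ht.1
    · rcases lt_trichotomy t (t₀+1) with h' | h' | h'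
      · rw [deriv_sp_mid h h',
          Set.indicator_of_notMem (by simp only [Set.mem_Iio, not_lt]; linarith),
          Set.indicator_of_mem (Set.mem_Ico.mpr ⟨h.le, h'⟩), zero_add]
      · exact absurd h' ht.2
      · rw [deriv_sp_right h',
          Set.indicator_of_notMem (by simp only [Set.mem_Iio, not_lt]; linarith),
          Set.indicator_of_notMem
            (by simp only [Set.mem_Ico, not_and, not_lt]; intro; linarith), add_zero]
  have hloc' : MeasureTheory.LocallyIntegrable (deriv (sp q t₀ σ)) volume :=
    locInt_congr_ae ((hloc.indicator measurableSet_Iio).add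
      ((MeasureTheory.locallyIntegrable_const (σ - q t₀)).indicator measurableSet_Ico)) hae.symm
  refine And.intro hloc' ?_
  have hii : ∀ a b : ℝ, IntervalIntegrable (deriv (sp q t₀ σ)) volume a b :=
    fun a b => locInt_intervalIntegrable hloc' a b
  have hmidint : ∀ t, t₀ < t → t ≤ t₀ + 1 →
      (∫ s in t₀..t, deriv (sp q t₀ σ) s) = (t - t₀) • (σ - q t₀) := by
    intro t h h'
    have h1 : (∫ s in t₀..t, deriv (sp q t₀ σ) s) = ∫ _ in t₀..t, (σ - q t₀) := by
      apply intervalIntegral.integral_congr_ae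
      filter_upwards [measure_eq_zero_iff_ae_notMem.mp
        ((Set.finite_singleton (t₀+1)).measure_zero volume)] with s hs hmem
      rw [Set.uIoc_of_le h.le] at hmem
      have hs2 : s < t₀ + 1 :=
        lt_of_le_of_ne (le_trans hmem.2 h') (by simpa using hs)
      exact deriv_sp_mid hmem.1 hs2
    rw [h1, intervalIntegral.integral_const]
  have key : ∀ t, sp q t₀ σ t - sp q t₀ σ t₀ = ∫ s in t₀..t, deriv (sp q t₀ σ) s := by
    intro t
    rcases le_or_gt t t₀ with h | h
    · have h1 : (∫ s in t₀..t, deriv (sp q t₀ σ) s) = ∫ s in t₀..t, deriv q s := by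
        apply intervalIntegral.integral_congr_ae
        filter_upwards [measure_eq_zero_iff_ae_notMem.mp
          ((Set.finite_singleton t₀).measure_zero volume)] with s hs hmem
        rw [Set.uIoc_comm, Set.uIoc_of_le h] at hmem
        have hs2 : s < t₀ := lt_of_le_of_ne hmem.2 (by simpa using hs)
        exact deriv_sp_left hs2
      rw [h1, ← hftc t₀ t, sp_left h, sp_left le_rfl]
    · rcases le_or_gt t (t₀ + 1) with h' | h'
      · rw [hmidint t h h', sp_mid h h', sp_left le_rfl]
        abel
      · have hsplit : (∫ s in t₀..t, deriv (sp q t₀ σ) s)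
            = (∫ s in t₀..(t₀+1), deriv (sp q t₀ σ) s)
              + ∫ s in (t₀+1)..t, deriv (sp q t₀ σ) s :=
          (intervalIntegral.integral_add_adjacent_intervals (hii _ _) (hii _ _)).symm
        have h2 : (∫ s in (t₀+1)..t, deriv (sp q t₀ σ) s) = 0 := by
          have h3 : (∫ s in (t₀+1)..t, deriv (sp q t₀ σ) s)
              = ∫ _ in (t₀+1)..t, (0 : EuclideanSpace ℝ (Fin k)) := by
            apply intervalIntegral.integral_congr_ae
            filter_upwards [] with s hmem
            rw [Set.uIoc_of_le h'.le] at hmem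
            exact deriv_sp_right hmem.1
          rw [h3, intervalIntegral.integral_const, smul_zero]
        have h1 : (∫ s in t₀..(t₀+1), deriv (sp q t₀ σ) s) = σ - q t₀ := by
          rw [hmidint (t₀+1) (by linarith) le_rfl]
          simp
        rw [hsplit, h1, h2, add_zero, sp_right h', sp_left le_rfl]
  intro a b
  have hint : (∫ s in a..b, deriv (sp q t₀ σ) s)
      = (∫ s in t₀..b, deriv (sp q t₀ σ) s) - ∫ s in t₀..a, deriv (sp q t₀ σ) s := by
    rw [← intervalIntegral.integral_add_adjacent_intervals (hii a t₀) (hii t₀ b),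
      intervalIntegral.integral_symm t₀ a]
    abel
  rw [hint, ← key a, ← key b]
  abel

end Auxiliary
section Auxiliary2

variable {k : ℕ}
variable {q : ℝ → EuclideanSpace ℝ (Fin k)} {t₀ : ℝ} {σ : EuclideanSpace ℝ (Fin k)}

lemma sp_energy {V : EuclideanSpace ℝ (Fin k) → ℝ} (hVnn : ∀ u, 0 ≤ V u)
    (hVc : Continuous V) (hσ : V σ = 0) (hq : FiniteEnergy V q) (t₀ : ℝ) :
    FiniteEnergy V (sp q t₀ σ) ∧
      Energy V (sp q t₀ σ) = (∫ t in Set.Iic t₀, Ed V q t)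
        + ((1/2) * ‖σ - q t₀‖^2
           + ∫ s in Set.Ioc t₀ (t₀+1), V (q t₀ + (s - t₀) • (σ - q t₀))) := by
  set mid : ℝ → ℝ := fun s => (1/2) * ‖σ - q t₀‖^2 + V (q t₀ + (s - t₀) • (σ - q t₀)) with hmiddef
  have hmidc : Continuous mid := by
    apply continuous_const.add
    exact hVc.comp (continuous_const.add
      ((continuous_id.sub continuous_const).smul continuous_const))
  have hae : Ed V (sp q t₀ σ) =ᵐ[volume]
      (fun t => Set.indicator (Set.Iic t₀) (Ed V q) t
        + Set.indicator (Set.Ioc t₀ (t₀+1)) mid t) := by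
    filter_upwards [ae_notin_pair (t₀ := t₀)] with t ht
    simp only [Set.mem_insert_iff, Set.mem_singleton_iff, not_or] at ht
    rcases lt_trichotomy t t₀ with h | h | h
    · rw [Set.indicator_of_mem (Set.mem_Iic.mpr h.le),
        Set.indicator_of_notMem (by simp only [Set.mem_Ioc, not_and, not_le]; intro h'; linarith),
        add_zero, Ed, Ed, deriv_sp_left h, sp_left h.le]
    · exact absurd h ht.1
    · rcases lt_trichotomy t (t₀+1) with h' | h' | h'
      · rw [Set.indicator_of_notMem (by simp only [Set.mem_Iic, not_le]; linarith),
          Set.indicator_of_mem (Set.mem_Ioc.mpr ⟨h, h'.le⟩), zero_add, Ed, deriv_sp_mid h h', sp_mid h h'.le]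
      · exact absurd h' ht.2
      · rw [Set.indicator_of_notMem (by simp only [Set.mem_Iic, not_le]; linarith),
          Set.indicator_of_notMem
            (by simp only [Set.mem_Ioc, not_and, not_le]; intro; linarith),
          add_zero, Ed, deriv_sp_right h', sp_right h', hσ]
        simp
  have hint1 : Integrable (Set.indicator (Set.Iic t₀) (Ed V q)) volume :=
    hq.indicator measurableSet_Iic
  have hint2 : Integrable (Set.indicator (Set.Ioc t₀ (t₀+1)) mid) volume :=
    (hmidc.integrableOn_Ioc).integrable_indicator measurableSet_Ioc
  have hfe : FiniteEnergy V (sp q t₀ σ) := (hint1.add hint2).congr hae.symm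
  refine ⟨hfe, ?_⟩
  have h1 : Energy V (sp q t₀ σ)
      = ∫ t, (Set.indicator (Set.Iic t₀) (Ed V q) t + Set.indicator (Set.Ioc t₀ (t₀+1)) mid t) :=
    integral_congr_ae hae
  rw [h1, integral_add hint1 hint2, MeasureTheory.integral_indicator measurableSet_Iic,
    MeasureTheory.integral_indicator measurableSet_Ioc]
  congr 1
  have hconst : IntegrableOn (fun _ : ℝ => (1/2) * ‖σ - q t₀‖^2) (Set.Ioc t₀ (t₀+1)) volume :=
    integrableOn_const measure_Ioc_lt_top.ne
  have hg : IntegrableOn (fun s => V (q t₀ + (s - t₀) • (σ - q t₀))) (Set.Ioc t₀ (t₀+1)) volume :=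
    (hVc.comp (continuous_const.add
      ((continuous_id.sub continuous_const).smul continuous_const))).integrableOn_Ioc
  rw [hmiddef]
  rw [MeasureTheory.integral_add hconst hg, setIntegral_const]
  congr 1
  simp [Real.volume_Ioc]

lemma sp_InX {V : EuclideanSpace ℝ (Fin k) → ℝ} {a b : EuclideanSpace ℝ (Fin k)}
    (hVnn : ∀ u, 0 ≤ V u) (hVc : Continuous V) (hσ : V σ = 0)
    (hq : InX V a b q) (t₀ : ℝ) : InX V a σ (sp q t₀ σ) := by
  obtain ⟨hac, hfe, hbot, htop⟩ := hq
  refine ⟨sp_AC hac t₀ σ, (sp_energy hVnn hVc hσ hfe t₀).1, ?_, ?_⟩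
  · apply Filter.Tendsto.congr' ?_ hbot
    filter_upwards [eventually_le_atBot t₀] with t ht
    exact (sp_left ht).symm
  · apply Filter.Tendsto.congr' ?_ (tendsto_const_nhds (x := σ))
    filter_upwards [eventually_ge_atTop (t₀ + 2)] with t ht
    exact (sp_right (by linarith)).symm

lemma seg_bound {V : EuclideanSpace ℝ (Fin k) → ℝ} (hVc : Continuous V)
    {σ p : EuclideanSpace ℝ (Fin k)} {δ ε' : ℝ} (hε' : 0 ≤ ε')
    (hδ : ∀ u, ‖u - σ‖ < δ → V u < ε') (hp : ‖p - σ‖ < δ) (t₀ : ℝ) :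
    (∫ s in Set.Ioc t₀ (t₀+1), V (p + (s - t₀) • (σ - p))) ≤ ε' := by
  have hg : IntegrableOn (fun s => V (p + (s - t₀) • (σ - p))) (Set.Ioc t₀ (t₀+1)) volume :=
    (hVc.comp (continuous_const.add
      ((continuous_id.sub continuous_const).smul continuous_const))).integrableOn_Ioc
  have hconst : IntegrableOn (fun _ : ℝ => ε') (Set.Ioc t₀ (t₀+1)) volume :=
    integrableOn_const measure_Ioc_lt_top.ne
  have hmono : (∫ s in Set.Ioc t₀ (t₀+1), V (p + (s - t₀) • (σ - p)))
      ≤ ∫ _ in Set.Ioc t₀ (t₀+1), ε' := by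
    apply setIntegral_mono_on hg hconst measurableSet_Ioc
    intro s hs
    set r : ℝ := s - t₀ with hr
    have hr1 : 0 < r := by simp [hr]; linarith [hs.1]
    have hr2 : r ≤ 1 := by simp [hr]; linarith [hs.2]
    have hvec : p + r • (σ - p) - σ = (1 - r) • (p - σ) := by
      module
    have hnorm : ‖p + r • (σ - p) - σ‖ < δ := by
      rw [hvec, norm_smul, Real.norm_eq_abs]
      have habs : |1 - r| ≤ 1 := abs_le.mpr ⟨by linarith, by linarith⟩
      calc |1 - r| * ‖p - σ‖ ≤ 1 * ‖p - σ‖ := by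
            apply mul_le_mul_of_nonneg_right habs (norm_nonneg _)
        _ = ‖p - σ‖ := one_mul _
        _ < δ := hp
    exact (hδ _ hnorm).le
  calc (∫ s in Set.Ioc t₀ (t₀+1), V (p + (s - t₀) • (σ - p)))
      ≤ ∫ _ in Set.Ioc t₀ (t₀+1), ε' := hmono
    _ = ε' := by rw [setIntegral_const]; simp [Real.volume_Ioc]

end Auxiliary2
theorem stmt_16 (V : EuclideanSpace ℝ (Fin k) → ℝ)
    (hV : ContDiff ℝ 2 V) (hVnn : ∀ u, 0 ≤ V u)
    (S : Set (EuclideanSpace ℝ (Fin k))) (hSfin : S.Finite)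
    (hSzero : ∀ u, V u = 0 ↔ u ∈ S)
    (hhess : ∀ σ ∈ S, ∀ u : EuclideanSpace ℝ (Fin k), u ≠ 0 →
      0 < iteratedFDeriv ℝ 2 V σ ![u, u])
    (α₀ β₀ R₀ : ℝ) (hα₀ : 0 < α₀) (hβ₀ : 0 < β₀) (hR₀ : 0 < R₀)
    (hcoer : ∀ u : EuclideanSpace ℝ (Fin k), R₀ ≤ ‖u‖ →
      α₀ * ‖u‖ ^ 2 ≤ ⟪gradient V u, u⟫ ∧ β₀ ≤ V u)
    (σm σp : EuclideanSpace ℝ (Fin k)) (hσm : σm ∈ S) (hσp : σp ∈ S) (hne : σm ≠ σp)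
    (hthree : (S \ {σm, σp}).Nonempty)
    (C : ℝ)
    (hC : C < sInf ((fun σ => mVal V σm σ + mVal V σ σp) '' (S \ {σm, σp}))) :
    ∃ ρ₂ > (0 : ℝ), ∀ q : ℝ → EuclideanSpace ℝ (Fin k),
      InX V σm σp q → Energy V q ≤ C →
      ∀ σ ∈ S \ {σm, σp}, ∀ t : ℝ, ρ₂ ≤ ‖q t - σ‖ := by
  classical
  set M := sInf ((fun σ => mVal V σm σ + mVal V σ σp) '' (S \ {σm, σp})) with hM
  set ε := M - C with hε
  have hεpos : 0 < ε := sub_pos.mpr hC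
  set ε' := ε / 8 with hε'def
  have hε'pos : 0 < ε' := by positivity
  have hVc : Continuous V := hV.continuous
  have hδex : ∀ σ' : EuclideanSpace ℝ (Fin k), ∃ δ : ℝ, 0 < δ ∧
      (σ' ∈ S → ∀ u, ‖u - σ'‖ < δ → V u < ε') := by
    intro σ'
    by_cases hσ' : σ' ∈ S
    · have h0 : V σ' = 0 := (hSzero σ').mpr hσ'
      have htend : Filter.Tendsto V (𝓝 σ') (𝓝 0) := by
        have h1 := hVc.tendsto σ'
        rwa [h0] at h1
      have hev : V ⁻¹' Set.Iio ε' ∈ 𝓝 σ' := htend (Iio_mem_nhds hε'pos)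
      rw [Metric.mem_nhds_iff] at hev
      obtain ⟨δ, hδpos, hδ⟩ := hev
      refine ⟨δ, hδpos, fun _ u hu => ?_⟩
      have hmem : u ∈ Metric.ball σ' δ := by
        rw [Metric.mem_ball, dist_eq_norm]; exact hu
      exact hδ hmem
    · exact ⟨1, one_pos, fun h => absurd h hσ'⟩
  choose δf hδf0 hδfS using hδex
  have hSne : hSfin.toFinset.Nonempty := by
    rw [Set.Finite.toFinset_nonempty]; exact ⟨σm, hσm⟩
  refine ⟨min (min 1 (ε/4)) (hSfin.toFinset.inf' hSne δf), ?_, ?_⟩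
  · apply lt_min (lt_min one_pos (by positivity))
    rw [Finset.lt_inf'_iff]
    exact fun σ' _ => hδf0 σ'
  intro q hq hE σ hσ t₀
  by_contra hcon
  push_neg at hcon
  have hσS : σ ∈ S := hσ.1
  have hσ0 : V σ = 0 := (hSzero σ).mpr hσS
  have hρδ : min (min 1 (ε/4)) (hSfin.toFinset.inf' hSne δf) ≤ δf σ :=
    le_trans (min_le_right _ _) (Finset.inf'_le δf (hSfin.mem_toFinset.mpr hσS))
  have hρ1 : ‖q t₀ - σ‖ < 1 :=
    lt_of_lt_of_le hcon (le_trans (min_le_left _ _) (min_le_left _ _))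
  have hρε : ‖q t₀ - σ‖ < ε/4 :=
    lt_of_lt_of_le hcon (le_trans (min_le_left _ _) (min_le_right _ _))
  have hpδ : ‖q t₀ - σ‖ < δf σ := lt_of_lt_of_le hcon hρδ
  obtain ⟨hac, hfe, hbot, htop⟩ := hq
  -- competitor 1 : from σm to σ
  have h₁ : InX V σm σ (sp q t₀ σ) := sp_InX hVnn hVc hσ0 ⟨hac, hfe, hbot, htop⟩ t₀
  obtain ⟨-, hE₁⟩ := sp_energy (q := q) hVnn hVc hσ0 hfe t₀
  -- competitor 2 : reverse, splice, reverse again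
  have hr : InX V σp σm (fun s => q (-s)) := InX_rev' ⟨hac, hfe, hbot, htop⟩
  have h₂' : InX V σp σ (sp (fun s => q (-s)) (-t₀) σ) := sp_InX hVnn hVc hσ0 hr (-t₀)
  obtain ⟨-, hE₂'⟩ := sp_energy (q := fun s => q (-s)) hVnn hVc hσ0 hr.2.1 (-t₀)
  have h₂ : InX V σ σp (fun s => sp (fun s' => q (-s')) (-t₀) σ (-s)) := InX_rev' h₂'
  have hE₂ : Energy V (fun s => sp (fun s' => q (-s')) (-t₀) σ (-s))
      = Energy V (sp (fun s' => q (-s')) (-t₀) σ) :=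
    energy_comp_neg' V _
  simp only [neg_neg] at hE₂'
  have hIic : (∫ s in Set.Iic (-t₀), Ed V (fun s' => q (-s')) s)
      = ∫ s in Set.Ioi t₀, Ed V q s := by
    have h1 : (∫ s in Set.Iic (-t₀), Ed V (fun s' => q (-s')) s)
        = ∫ s in Set.Iic (-t₀), Ed V q (-s) :=
      setIntegral_congr_fun measurableSet_Iic (fun s _ => Ed_comp_neg' V q s)
    rw [h1, integral_comp_neg_Iic, neg_neg]
  rw [hIic] at hE₂'
  have hsplitE : (∫ s in Set.Iic t₀, Ed V q s) + (∫ s in Set.Ioi t₀, Ed V q s) = Energy V q :=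
    integral_Iic_add_Ioi hfe.integrableOn hfe.integrableOn
  have hnorm2 : (1/2) * ‖σ - q t₀‖^2 ≤ ε/8 := by
    have h1 : ‖σ - q t₀‖ = ‖q t₀ - σ‖ := norm_sub_rev _ _
    nlinarith [norm_nonneg (q t₀ - σ), hεpos]
  have hseg1 : (∫ s in Set.Ioc t₀ (t₀+1), V (q t₀ + (s - t₀) • (σ - q t₀))) ≤ ε' :=
    seg_bound hVc hε'pos.le (hδfS σ hσS) hpδ t₀
  have hseg2 : (∫ s in Set.Ioc (-t₀) (-t₀+1), V (q t₀ + (s - (-t₀)) • (σ - q t₀))) ≤ ε' :=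
    seg_bound hVc hε'pos.le (hδfS σ hσS) hpδ (-t₀)
  have hm1 : mVal V σm σ ≤ Energy V (sp q t₀ σ) :=
    csInf_le (bddBelow_energy' hVnn _) ⟨sp q t₀ σ, h₁, rfl⟩
  have hm2 : mVal V σ σp ≤ Energy V (fun s => sp (fun s' => q (-s')) (-t₀) σ (-s)) :=
    csInf_le (bddBelow_energy' hVnn _) ⟨_, h₂, rfl⟩
  have hMle : M ≤ mVal V σm σ + mVal V σ σp := by
    apply csInf_le
    · refine ⟨0, ?_⟩
      rintro x ⟨σ', -, rfl⟩
      exact add_nonneg (mVal_nonneg' hVnn _ _) (mVal_nonneg' hVnn _ _)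
    · exact Set.mem_image_of_mem _ hσ
  have hε'le : ε' = ε/8 := hε'def
  linarith [hm1, hm2, hE₁, hE₂, hE₂', hsplitE, hnorm2, hseg1, hseg2, hE, hMle, hεpos]
end
end
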